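/- arXiv:2502.13743 — 9 statements merged into one kernel-verified Lean document; each statement's English description precedes it below -/
import Mathlib

section
/- Theorem 1 (reasoning from possible information, μ = 1): Let α be an L-sentence and Δ a finite set of L-sentences such that there exists a possible index i with Mᵢ ⊨ Δ. Then P₁(α|Δ) = (∑ᵢ ⟦α⟧ᵢ · χᵢ · p i) / (∑ᵢ χᵢ · p i), where χᵢ := 1 if p i > 0 and Mᵢ ⊨ Δ, and χᵢ := 0 otherwise. -/
open FirstOrder
open scoped Classical

variable {L : FirstOrder.Language} {ι : Type*}

/-- `Sat M α i` means the structure `M i` satisfies the sentence `α` (i.e. `M i ⊨ α`). -/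
def Sat (M : ι → Type*) [∀ i, L.Structure (M i)] (α : L.Sentence) (i : ι) : Prop :=
  FirstOrder.Language.Sentence.Realize (M := M i) α

/-- The indicator `⟦α⟧ᵢ`: `1` if `M i ⊨ α`, `0` otherwise (a natural number). -/
noncomputable def ind (M : ι → Type*) [∀ i, L.Structure (M i)]
    (α : L.Sentence) (i : ι) : ℕ :=
  if Sat M α i then 1 else 0

/-- `M i ⊨ S`: the structure `M i` satisfies every sentence in the finite set `S`. -/
def SatAll (M : ι → Type*) [∀ i, L.Structure (M i)]
    (S : Finset L.Sentence) (i : ι) : Prop :=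
  ∀ β ∈ S, Sat M β i

/-- `|Δ|ᵢ`: the number of sentences of `Δ` that are true in `M i`. -/
noncomputable def nSat (M : ι → Type*) [∀ i, L.Structure (M i)]
    (Δ : Finset L.Sentence) (i : ι) : ℕ :=
  (Δ.filter (fun β => Sat M β i)).card

/-- A finite set `S` of sentences is possible if some possible index satisfies all of it. -/
def PossibleSet (M : ι → Type*) [∀ i, L.Structure (M i)] (p : ι → ℝ)
    (S : Finset L.Sentence) : Prop :=
  ∃ i, 0 < p i ∧ SatAll M S i

/-- `MPS Δ`: the cardinality-maximal possible subsets of `Δ`. -/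
def MPS (M : ι → Type*) [∀ i, L.Structure (M i)] (p : ι → ℝ)
    (Δ : Finset L.Sentence) : Set (Finset L.Sentence) :=
  {S | S ⊆ Δ ∧ PossibleSet M p S ∧
    ∀ T ⊆ Δ, PossibleSet M p T → T.card ≤ S.card}

/-- `⟨Δ⟩`: the possible indices satisfying some cardinality-maximal possible subset of `Δ`. -/
def angleSet (M : ι → Type*) [∀ i, L.Structure (M i)] (p : ι → ℝ)
    (Δ : Finset L.Sentence) : Set ι :=
  {i | 0 < p i ∧ ∃ S ∈ MPS M p Δ, SatAll M S i}

/-- `L(α|Δ) = (∑_{i∈⟨Δ⟩} ⟦α⟧ᵢ·p i) / (∑_{i∈⟨Δ⟩} p i)`. -/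
noncomputable def Lcond (M : ι → Type*) [∀ i, L.Structure (M i)] (p : ι → ℝ)
    (α : L.Sentence) (Δ : Finset L.Sentence) : ℝ :=
  (∑ᶠ i ∈ angleSet M p Δ, (ind M α i : ℝ) * p i) / (∑ᶠ i ∈ angleSet M p Δ, p i)

/-- `P_μ(α|Δ)`, with natural-number exponents (so `0 ^ 0 = 1`). -/
noncomputable def Pcond (M : ι → Type*) [∀ i, L.Structure (M i)] (p : ι → ℝ)
    (μ : ℝ) (α : L.Sentence) (Δ : Finset L.Sentence) : ℝ :=
  (∑ᶠ i, μ ^ (ind M α i) * (1 - μ) ^ (1 - ind M α i) *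
      (μ ^ (nSat M Δ i) * (1 - μ) ^ (Δ.card - nSat M Δ i)) * p i) /
  (∑ᶠ i, μ ^ (nSat M Δ i) * (1 - μ) ^ (Δ.card - nSat M Δ i) * p i)

/-- A finite set `S` of sentences is consistent if some index satisfies all of it. -/
def ConsistentSet (M : ι → Type*) [∀ i, L.Structure (M i)]
    (S : Finset L.Sentence) : Prop :=
  ∃ i, SatAll M S i

/-- `MCS Δ`: the cardinality-maximal consistent subsets of `Δ`. -/
def MCS (M : ι → Type*) [∀ i, L.Structure (M i)]
    (Δ : Finset L.Sentence) : Set (Finset L.Sentence) :=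
  {S | S ⊆ Δ ∧ ConsistentSet M S ∧
    ∀ T ⊆ Δ, ConsistentSet M T → T.card ≤ S.card}

/-- `⟪Δ⟫`: the indices satisfying some cardinality-maximal consistent subset of `Δ`. -/
def dangleSet (M : ι → Type*) [∀ i, L.Structure (M i)]
    (Δ : Finset L.Sentence) : Set ι :=
  {i | ∃ S ∈ MCS M Δ, SatAll M S i}

/-- **Theorem 1** (reasoning from possible information, `μ = 1`): if some possible index
satisfies `Δ`, then `P₁(α|Δ) = (∑ᵢ ⟦α⟧ᵢ·χᵢ·p i) / (∑ᵢ χᵢ·p i)` where `χᵢ = 1` iff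
`p i > 0` and `Mᵢ ⊨ Δ`. -/
theorem stmt3 [Countable ι]
    (M : ι → Type*) [∀ i, L.Structure (M i)] [∀ i, Nonempty (M i)]
    (p : ι → ℝ) (hp0 : ∀ i, 0 ≤ p i) (hpfin : (Function.support p).Finite)
    (hp1 : ∑ᶠ i, p i = 1)
    (α : L.Sentence) (Δ : Finset L.Sentence)
    (hposs : ∃ i, 0 < p i ∧ SatAll M Δ i) :
    Pcond M p 1 α Δ =
      (∑ᶠ i, (ind M α i : ℝ) *
          (if 0 < p i ∧ SatAll M Δ i then (1 : ℝ) else 0) * p i) /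
        (∑ᶠ i, (if 0 < p i ∧ SatAll M Δ i then (1 : ℝ) else 0) * p i) := by
  have hterm : ∀ i, ((1:ℝ) ^ (nSat M Δ i) * (1 - 1) ^ (Δ.card - nSat M Δ i)) * p i
      = (if 0 < p i ∧ SatAll M Δ i then (1 : ℝ) else 0) * p i := by
    intro i
    rcases eq_or_lt_of_le (hp0 i) with hpz | hpz
    · simp [← hpz]
    have hle : nSat M Δ i ≤ Δ.card := Finset.card_filter_le _ _
    by_cases hΔ : SatAll M Δ i
    · have : nSat M Δ i = Δ.card := by
        unfold nSat
        rw [Finset.filter_true_of_mem hΔ]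
      simp [this, hpz, hΔ]
    · have hne : nSat M Δ i ≠ Δ.card := by
        intro h
        exact hΔ (Finset.filter_card_eq h)
      have : Δ.card - nSat M Δ i ≠ 0 := by omega
      simp [this, hpz, hΔ]
  unfold Pcond
  congr 1
  · apply finsum_congr
    intro i
    rw [mul_assoc, mul_assoc, hterm i, ← mul_assoc, ← mul_assoc]
    congr 1
    by_cases hα : Sat M α i <;> simp [ind, hα]
  · apply finsum_congr
    intro i
    rw [hterm i]
end

section
/- Corollary (characterization of certain reasoning at μ = 1): Let α be an L-sentence and Δ a finite set of L-sentences such that there exists a possible index i with Mᵢ ⊨ Δ. Then P₁(α|Δ) = 1 if and only if Δ ⊫ α (α is an empirical consequence of Δ). -/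
open FirstOrder
open scoped Classical

variable {L : FirstOrder.Language} {ι : Type*}

/-- **Corollary** (characterization of certain reasoning at `μ = 1`): if some possible index
satisfies `Δ`, then `P₁(α|Δ) = 1` iff `α` is an empirical consequence of `Δ`. -/
theorem stmt4 [Countable ι]
    (M : ι → Type*) [∀ i, L.Structure (M i)] [∀ i, Nonempty (M i)]
    (p : ι → ℝ) (hp0 : ∀ i, 0 ≤ p i) (hpfin : (Function.support p).Finite)
    (hp1 : ∑ᶠ i, p i = 1)
    (α : L.Sentence) (Δ : Finset L.Sentence)
    (hposs : ∃ i, 0 < p i ∧ SatAll M Δ i) :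
    Pcond M p 1 α Δ = 1 ↔ ∀ i, 0 < p i → SatAll M Δ i → Sat M α i := by
  classical
  obtain ⟨i₀, hpi₀, hsat₀⟩ := hposs
  set s := hpfin.toFinset with hs
  have hfin : ∀ (f : ι → ℝ), (∀ i, p i = 0 → f i = 0) → ∑ᶠ i, f i = ∑ i ∈ s, f i := by
    intro f hf
    apply finsum_eq_finset_sum_of_support_subset
    intro i hi
    have : p i ≠ 0 := fun h => hi (hf i h)
    simpa [hs] using this
  have hsub : ∀ i, Δ.card - nSat M Δ i = 0 ↔ SatAll M Δ i := by
    intro i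
    constructor
    · intro h β hβ
      have hle : Δ.card ≤ nSat M Δ i := Nat.sub_eq_zero_iff_le.mp h
      have : Δ.filter (fun β => Sat M β i) = Δ :=
        Finset.eq_of_subset_of_card_le (Finset.filter_subset _ _) hle
      have := this ▸ hβ
      exact (Finset.mem_filter.mp this).2
    · intro h
      have : Δ.filter (fun β => Sat M β i) = Δ := Finset.filter_eq_self.mpr h
      simp [nSat, this]
  have hterm : ∀ i, (1:ℝ) ^ (nSat M Δ i) * (1 - 1) ^ (Δ.card - nSat M Δ i) * p i
      = if SatAll M Δ i then p i else 0 := by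
    intro i
    rw [one_pow, one_mul, sub_self, zero_pow_eq]
    by_cases h : SatAll M Δ i
    · simp [(hsub i).mpr h, h]
    · have hne : Δ.card - nSat M Δ i ≠ 0 := fun hc => h ((hsub i).mp hc)
      simp [hne, h]
  have htermN : ∀ i, (1:ℝ) ^ (ind M α i) * (1 - 1) ^ (1 - ind M α i) *
      ((1:ℝ) ^ (nSat M Δ i) * (1 - 1) ^ (Δ.card - nSat M Δ i)) * p i
      = if Sat M α i ∧ SatAll M Δ i then p i else 0 := by
    intro i
    rw [one_pow, one_pow, one_mul, sub_self, zero_pow_eq, zero_pow_eq]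
    by_cases hα : Sat M α i <;> by_cases h : SatAll M Δ i
    · simp [ind, hα, (hsub i).mpr h, h]
    · have hne : Δ.card - nSat M Δ i ≠ 0 := fun hc => h ((hsub i).mp hc)
      simp [ind, hα, hne, h]
    · simp [ind, hα]
    · simp [ind, hα]
  have hN : (∑ᶠ i, (1:ℝ) ^ (ind M α i) * (1 - 1) ^ (1 - ind M α i) *
      ((1:ℝ) ^ (nSat M Δ i) * (1 - 1) ^ (Δ.card - nSat M Δ i)) * p i)
      = ∑ i ∈ s, (if Sat M α i ∧ SatAll M Δ i then p i else 0) := by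
    rw [finsum_congr htermN]
    apply hfin
    intro i hi; simp [hi]
  have hD : (∑ᶠ i, (1:ℝ) ^ (nSat M Δ i) * (1 - 1) ^ (Δ.card - nSat M Δ i) * p i)
      = ∑ i ∈ s, (if SatAll M Δ i then p i else 0) := by
    rw [finsum_congr hterm]
    apply hfin
    intro i hi; simp [hi]
  have hi₀s : i₀ ∈ s := by simp [hs, hpi₀.ne']
  have hDpos : 0 < ∑ i ∈ s, (if SatAll M Δ i then p i else 0) := by
    apply Finset.sum_pos'
    · intro i _
      split <;> simp [hp0 i]
    · exact ⟨i₀, hi₀s, by simp [hsat₀, hpi₀]⟩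
  have hle : ∀ i ∈ s, (if Sat M α i ∧ SatAll M Δ i then p i else 0)
      ≤ (if SatAll M Δ i then p i else 0) := by
    intro i _
    by_cases hα : Sat M α i <;> by_cases h : SatAll M Δ i <;> simp [hα, h, hp0 i]
  rw [Pcond, hN, hD, div_eq_one_iff_eq hDpos.ne',
    Finset.sum_eq_sum_iff_of_le hle]
  constructor
  · intro H i hpi hsat
    have his : i ∈ s := by simp [hs, hpi.ne']
    have := H i his
    by_contra hα
    simp [hα, hsat] at this
    exact hpi.ne' this.symm
  · intro H i his
    have hpi : 0 < p i := by
      have : p i ≠ 0 := by simpa [hs] using his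
      exact lt_of_le_of_ne (hp0 i) (Ne.symm this)
    by_cases h : SatAll M Δ i
    · simp [h, H i hpi h]
    · simp [h]
end

section
/- Theorem 2 (reasoning from impossible information, μ → 1): For every L-sentence α and every finite set Δ of L-sentences, the function μ ↦ P_μ(α|Δ) tends, as μ → 1 from the left (i.e., along the filter 𝓝[<] 1 restricted to (0,1)), to L(α|Δ) = (∑_{i∈⟨Δ⟩} ⟦α⟧ᵢ·p i) / (∑_{i∈⟨Δ⟩} p i). -/
open FirstOrder
open scoped Classical

variable {L : FirstOrder.Language} {ι : Type*}

/-- **Theorem 2** (reasoning from impossible information, `μ → 1`): as `μ → 1` from the left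
along `(0,1)`, `P_μ(α|Δ)` tends to `L(α|Δ) = (∑_{i∈⟨Δ⟩} ⟦α⟧ᵢ·p i) / (∑_{i∈⟨Δ⟩} p i)`. -/
theorem stmt6 [Countable ι]
    (M : ι → Type*) [∀ i, L.Structure (M i)] [∀ i, Nonempty (M i)]
    (p : ι → ℝ) (hp0 : ∀ i, 0 ≤ p i) (hpfin : (Function.support p).Finite)
    (hp1 : ∑ᶠ i, p i = 1)
    (α : L.Sentence) (Δ : Finset L.Sentence) :
    Filter.Tendsto (fun μ : ℝ => Pcond M p μ α Δ)
      (nhdsWithin 1 (Set.Ioo (0 : ℝ) 1)) (nhds (Lcond M p α Δ)) := by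
  classical
  set F := hpfin.toFinset with hF
  have hmemF : ∀ i, i ∈ F ↔ p i ≠ 0 := fun i => hpfin.mem_toFinset
  have hFpos : ∀ i ∈ F, 0 < p i := fun i hi =>
    lt_of_le_of_ne (hp0 i) (Ne.symm ((hmemF i).1 hi))
  have hcoeF : (↑F : Set ι) = Function.support p := hpfin.coe_toFinset
  have hFne : F.Nonempty := by
    by_contra h
    rw [Finset.not_nonempty_iff_eq_empty] at h
    have : ∑ᶠ i, p i = 0 := by
      rw [finsum_eq_sum_of_support_subset p (s := F) (by rw [hcoeF]), h,
        Finset.sum_empty]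
    rw [hp1] at this; norm_num at this
  set n : ι → ℕ := fun i => nSat M Δ i with hn
  set m : ℕ := F.sup n with hm
  set A : Finset ι := F.filter (fun i => n i = m) with hA
  obtain ⟨j₀, hj₀F, hj₀m⟩ := Finset.exists_mem_eq_sup F hFne n
  have hAne : A.Nonempty := ⟨j₀, Finset.mem_filter.2 ⟨hj₀F, hj₀m.symm⟩⟩
  have hle : ∀ i ∈ F, n i ≤ m := fun i hi => Finset.le_sup hi
  have hmΔ : m ≤ Δ.card := by
    rw [hm, hj₀m]; exact Finset.card_filter_le _ _
  -- angleSet = A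
  have hangle : angleSet M p Δ = (↑A : Set ι) := by
    ext i
    constructor
    · rintro ⟨hpi, S, ⟨hSΔ, hSposs, hSmax⟩, hSi⟩
      have hiF : i ∈ F := (hmemF i).2 (ne_of_gt hpi)
      have h1 : m ≤ S.card := by
        rw [hm, hj₀m]
        exact hSmax (Δ.filter (fun β => Sat M β j₀)) (Finset.filter_subset _ _)
          ⟨j₀, hFpos j₀ hj₀F, fun β hβ => (Finset.mem_filter.1 hβ).2⟩
      have h2 : S.card ≤ n i := by
        have hsub : S ⊆ Δ.filter (fun β => Sat M β i) := fun β hβ =>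
          Finset.mem_filter.2 ⟨hSΔ hβ, hSi β hβ⟩
        exact Finset.card_le_card hsub
      exact Finset.mem_coe.2 (Finset.mem_filter.2
        ⟨hiF, le_antisymm (hle i hiF) (h1.trans h2)⟩)
    · intro hi
      obtain ⟨hiF, hni⟩ := Finset.mem_filter.1 (Finset.mem_coe.1 hi)
      have hpi := hFpos i hiF
      refine ⟨hpi, Δ.filter (fun β => Sat M β i),
        ⟨Finset.filter_subset _ _,
          ⟨i, hpi, fun β hβ => (Finset.mem_filter.1 hβ).2⟩, ?_⟩,
        fun β hβ => (Finset.mem_filter.1 hβ).2⟩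
      rintro T hT ⟨j, hpj, hTj⟩
      have hjF : j ∈ F := (hmemF j).2 (ne_of_gt hpj)
      have hsub : T ⊆ Δ.filter (fun β => Sat M β j) := fun β hβ =>
        Finset.mem_filter.2 ⟨hT hβ, hTj β hβ⟩
      calc T.card ≤ n j := Finset.card_le_card hsub
        _ ≤ m := hle j hjF
        _ = n i := hni.symm
        _ = (Δ.filter (fun β => Sat M β i)).card := rfl
  -- the reduced numerator and denominator
  set N' : ℝ → ℝ := fun μ => ∑ i ∈ F,
    μ ^ ind M α i * (1 - μ) ^ (1 - ind M α i) *
      (μ ^ n i * (1 - μ) ^ (m - n i)) * p i with hN'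
  set D' : ℝ → ℝ := fun μ => ∑ i ∈ F, μ ^ n i * (1 - μ) ^ (m - n i) * p i with hD'
  set N1 : ℝ := ∑ i ∈ A, (ind M α i : ℝ) * p i with hN1
  set D1 : ℝ := ∑ i ∈ A, p i with hD1
  have hD1pos : 0 < D1 :=
    Finset.sum_pos (fun i hi => hFpos i (Finset.mem_filter.1 hi).1) hAne
  -- Lcond = N1 / D1
  have hL : Lcond M p α Δ = N1 / D1 := by
    rw [Lcond, hangle, finsum_mem_coe_finset, finsum_mem_coe_finset]
  -- Pcond = N'/D' on Ioo 0 1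
  have hPeq : ∀ μ ∈ Set.Ioo (0 : ℝ) 1, Pcond M p μ α Δ = N' μ / D' μ := by
    intro μ hμ
    have hμ1 : (1 : ℝ) - μ ≠ 0 := sub_ne_zero.2 (ne_of_gt hμ.2)
    have hc : ((1 : ℝ) - μ) ^ (Δ.card - m) ≠ 0 := pow_ne_zero _ hμ1
    have hfac : ∀ i ∈ F, ((1 : ℝ) - μ) ^ (Δ.card - n i) =
        (1 - μ) ^ (Δ.card - m) * (1 - μ) ^ (m - n i) := by
      intro i hi
      rw [← pow_add]
      congr 1
      have := hle i hi
      omega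
    rw [Pcond]
    have hnum : (∑ᶠ i, μ ^ ind M α i * (1 - μ) ^ (1 - ind M α i) *
        (μ ^ nSat M Δ i * (1 - μ) ^ (Δ.card - nSat M Δ i)) * p i) =
        (1 - μ) ^ (Δ.card - m) * N' μ := by
      rw [finsum_eq_sum_of_support_subset _ (s := F)]
      · rw [hN', Finset.mul_sum]
        refine Finset.sum_congr rfl fun i hi => ?_
        rw [hfac i hi]; ring
      · intro i hi
        rw [hcoeF]
        intro hpi
        apply hi
        simp [Function.mem_support, hpi] at *
    have hden : (∑ᶠ i, μ ^ nSat M Δ i * (1 - μ) ^ (Δ.card - nSat M Δ i) * p i) =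
        (1 - μ) ^ (Δ.card - m) * D' μ := by
      rw [finsum_eq_sum_of_support_subset _ (s := F)]
      · rw [hD', Finset.mul_sum]
        refine Finset.sum_congr rfl fun i hi => ?_
        rw [hfac i hi]; ring
      · intro i hi
        rw [hcoeF]
        intro hpi
        apply hi
        simp [Function.mem_support, hpi] at *
    rw [hnum, hden, mul_div_mul_left _ _ hc]
  -- values at 1
  have hNval : N' 1 = N1 := by
    rw [hN', hN1, hA, Finset.sum_filter]
    refine Finset.sum_congr rfl fun i hi => ?_
    have : (1 : ℝ) - 1 = 0 := by norm_num
    rw [this, one_pow, one_pow]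
    rcases eq_or_lt_of_le (hle i hi) with hnm | hnm
    · by_cases hs : Sat M α i <;> simp [ind, hs, hnm, zero_pow]
    · have h1 : m - n i ≠ 0 := Nat.sub_ne_zero_of_lt hnm
      by_cases hs : Sat M α i <;> simp [ind, hs, hnm.ne, zero_pow h1]
  have hDval : D' 1 = D1 := by
    rw [hD', hD1, hA, Finset.sum_filter]
    refine Finset.sum_congr rfl fun i hi => ?_
    have : (1 : ℝ) - 1 = 0 := by norm_num
    rw [this, one_pow]
    rcases eq_or_lt_of_le (hle i hi) with hnm | hnm
    · simp [hnm]
    · have h1 : m - n i ≠ 0 := Nat.sub_ne_zero_of_lt hnm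
      simp [hnm.ne, zero_pow h1]
  -- continuity
  have hNc : Continuous N' := by
    apply continuous_finset_sum
    intro i _
    fun_prop
  have hDc : Continuous D' := by
    apply continuous_finset_sum
    intro i _
    fun_prop
  have hNt : Filter.Tendsto N' (nhdsWithin 1 (Set.Ioo (0 : ℝ) 1)) (nhds N1) := by
    rw [← hNval]
    exact (hNc.tendsto 1).mono_left nhdsWithin_le_nhds
  have hDt : Filter.Tendsto D' (nhdsWithin 1 (Set.Ioo (0 : ℝ) 1)) (nhds D1) := by
    rw [← hDval]
    exact (hDc.tendsto 1).mono_left nhdsWithin_le_nhds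
  have key : Filter.Tendsto (fun μ => N' μ / D' μ)
      (nhdsWithin 1 (Set.Ioo (0 : ℝ) 1)) (nhds (N1 / D1)) :=
    hNt.div hDt (ne_of_gt hD1pos)
  rw [hL]
  refine key.congr' ?_
  filter_upwards [self_mem_nhdsWithin] with μ hμ
  exact (hPeq μ hμ).symm
end

section
/- Characterization of ⟨Δ⟩ by maximizers (auxiliary lemma used in the proof of Theorem 2): For every finite set Δ of L-sentences and every index i, one has i ∈ ⟨Δ⟩ if and only if p i > 0 and |Δ|ᵢ is maximal among possible indices, i.e., |Δ|ᵢ ≥ |Δ|_j for every possible index j. -/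
open FirstOrder
open scoped Classical

variable {L : FirstOrder.Language} {ι : Type*}

/-- **Characterization of `⟨Δ⟩` by maximizers**: `i ∈ ⟨Δ⟩` iff `p i > 0` and `|Δ|ᵢ` is
maximal among possible indices. -/
theorem stmt7 [Countable ι]
    (M : ι → Type*) [∀ i, L.Structure (M i)] [∀ i, Nonempty (M i)]
    (p : ι → ℝ) (hp0 : ∀ i, 0 ≤ p i) (hpfin : (Function.support p).Finite)
    (hp1 : ∑ᶠ i, p i = 1)
    (Δ : Finset L.Sentence) (i : ι) :
    i ∈ angleSet M p Δ ↔
      0 < p i ∧ ∀ j, 0 < p j → nSat M Δ j ≤ nSat M Δ i := by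
  constructor
  · rintro ⟨hpi, S, ⟨hSΔ, -, hSmax⟩, hSi⟩
    refine ⟨hpi, fun j hpj => ?_⟩
    have h1 : S.card ≤ nSat M Δ i := by
      apply Finset.card_le_card
      intro β hβ
      exact Finset.mem_filter.2 ⟨hSΔ hβ, hSi β hβ⟩
    have h2 : nSat M Δ j ≤ S.card := by
      apply hSmax _ (Finset.filter_subset _ _)
      exact ⟨j, hpj, fun β hβ => (Finset.mem_filter.1 hβ).2⟩
    exact h2.trans h1
  · rintro ⟨hpi, hmax⟩
    refine ⟨hpi, Δ.filter (fun β => Sat M β i), ⟨Finset.filter_subset _ _,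
      ⟨i, hpi, fun β hβ => (Finset.mem_filter.1 hβ).2⟩, ?_⟩,
      fun β hβ => (Finset.mem_filter.1 hβ).2⟩
    rintro T hTΔ ⟨j, hpj, hTj⟩
    have : T.card ≤ nSat M Δ j := by
      apply Finset.card_le_card
      intro β hβ
      exact Finset.mem_filter.2 ⟨hTΔ hβ, hTj β hβ⟩
    exact this.trans (hmax j hpj)
end

section
/- Corollary (certain reasoning at μ → 1 via cardinality-maximal possible subsets): For every L-sentence α and finite set Δ of L-sentences, L(α|Δ) = 1 if and only if S ⊫ α for every cardinality-maximal possible subset S ∈ MPS(Δ). -/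
open FirstOrder
open scoped Classical

variable {L : FirstOrder.Language} {ι : Type*}

/-- **Corollary** (certain reasoning at `μ → 1` via cardinality-maximal possible subsets):
`L(α|Δ) = 1` iff `S ⊫ α` for every `S ∈ MPS(Δ)`. -/
theorem stmt8 [Countable ι]
    (M : ι → Type*) [∀ i, L.Structure (M i)] [∀ i, Nonempty (M i)]
    (p : ι → ℝ) (hp0 : ∀ i, 0 ≤ p i) (hpfin : (Function.support p).Finite)
    (hp1 : ∑ᶠ i, p i = 1)
    (α : L.Sentence) (Δ : Finset L.Sentence) :
    Lcond M p α Δ = 1 ↔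
      ∀ S ∈ MPS M p Δ, ∀ i, 0 < p i → SatAll M S i → Sat M α i := by
  classical
  have hex : ∃ i, 0 < p i := by
    by_contra h
    push_neg at h
    have hz : p = 0 := funext fun i => le_antisymm (h i) (hp0 i)
    rw [hz] at hp1
    simp at hp1
  obtain ⟨i0, hi0⟩ := hex
  have hMPS : (MPS M p Δ).Nonempty := by
    set s : Finset (Finset L.Sentence) := Δ.powerset.filter (fun S => PossibleSet M p S) with hs
    have hsne : s.Nonempty := by
      refine ⟨∅, Finset.mem_filter.mpr ⟨Finset.mem_powerset.mpr (Finset.empty_subset _), ?_⟩⟩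
      exact ⟨i0, hi0, fun β hβ => absurd hβ (Finset.notMem_empty β)⟩
    obtain ⟨S, hSs, hSmax⟩ := Finset.exists_max_image s Finset.card hsne
    exact ⟨S, Finset.mem_powerset.mp (Finset.mem_filter.mp hSs).1,
      (Finset.mem_filter.mp hSs).2,
      fun T hT hTposs => hSmax T (Finset.mem_filter.mpr ⟨Finset.mem_powerset.mpr hT, hTposs⟩)⟩
  have hAfin : (angleSet M p Δ).Finite := hpfin.subset (fun i hi => ne_of_gt hi.1)
  set F := hAfin.toFinset with hF
  have hmemF : ∀ i, i ∈ F ↔ i ∈ angleSet M p Δ := fun i => hAfin.mem_toFinset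
  have hFne : F.Nonempty := by
    obtain ⟨S, hS⟩ := hMPS
    obtain ⟨i, hpi, hsat⟩ := hS.2.1
    exact ⟨i, (hmemF i).mpr ⟨hpi, S, hS, hsat⟩⟩
  have hD : 0 < ∑ i ∈ F, p i :=
    Finset.sum_pos (fun i hi => ((hmemF i).mp hi).1) hFne
  have hnum : ∑ᶠ i ∈ angleSet M p Δ, (ind M α i : ℝ) * p i
      = ∑ i ∈ F, (ind M α i : ℝ) * p i := finsum_mem_eq_finite_toFinset_sum _ hAfin
  have hden : ∑ᶠ i ∈ angleSet M p Δ, p i = ∑ i ∈ F, p i := finsum_mem_eq_finite_toFinset_sum _ hAfin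
  rw [Lcond, hnum, hden, div_eq_one_iff_eq hD.ne']
  have hle : ∀ i ∈ F, (ind M α i : ℝ) * p i ≤ p i := by
    intro i hi
    have hpi := ((hmemF i).mp hi).1
    unfold ind
    split
    · simp
    · simp [hpi.le]
  constructor
  · intro heq S hS i hpi hsat
    have hiF : i ∈ F := (hmemF i).mpr ⟨hpi, S, hS, hsat⟩
    have hterm := (Finset.sum_eq_sum_iff_of_le hle).mp heq i hiF
    by_contra hnsat
    have hind : ind M α i = 0 := if_neg hnsat
    rw [hind] at hterm
    simp at hterm
    exact hpi.ne' hterm.symm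
  · intro h
    refine (Finset.sum_congr rfl ?_).symm
    intro i hi
    obtain ⟨hpi, S, hS, hsat⟩ := (hmemF i).mp hi
    have : Sat M α i := h S hS i hpi hsat
    simp [ind, this]
end

section
/- Corollary (certain reasoning at μ → 1 via cardinality-maximal consistent subsets): Let α be an L-sentence and Δ a finite set of L-sentences such that ⟨Δ⟩ = ⟪Δ⟫ (as sets of indices). Then L(α|Δ) = 1 if and only if S ⊨ α for every cardinality-maximal consistent subset S ∈ MCS(Δ). -/
open FirstOrder
open scoped Classical

variable {L : FirstOrder.Language} {ι : Type*}

/-- **Corollary** (certain reasoning at `μ → 1` via cardinality-maximal consistent subsets):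
if `⟨Δ⟩ = ⟪Δ⟫`, then `L(α|Δ) = 1` iff `S ⊨ α` for every `S ∈ MCS(Δ)`. -/
theorem stmt9 [Countable ι]
    (M : ι → Type*) [∀ i, L.Structure (M i)] [∀ i, Nonempty (M i)]
    (p : ι → ℝ) (hp0 : ∀ i, 0 ≤ p i) (hpfin : (Function.support p).Finite)
    (hp1 : ∑ᶠ i, p i = 1)
    (α : L.Sentence) (Δ : Finset L.Sentence)
    (heq : angleSet M p Δ = dangleSet M Δ) :
    Lcond M p α Δ = 1 ↔
      ∀ S ∈ MCS M Δ, ∀ i, SatAll M S i → Sat M α i := by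
  classical
  -- there is a possible index
  have hex : ∃ i, 0 < p i := by
    by_contra h
    push_neg at h
    have hz : ∀ i, p i = 0 := fun i => le_antisymm (h i) (hp0 i)
    rw [funext hz] at hp1
    simp at hp1
  obtain ⟨i0, hi0⟩ := hex
  -- MPS is nonempty
  have hemp : PossibleSet M p (∅ : Finset L.Sentence) := ⟨i0, hi0, by simp [SatAll]⟩
  have h𝒮ne : (Δ.powerset.filter (fun S => PossibleSet M p S)).Nonempty :=
    ⟨∅, by simpa using hemp⟩
  obtain ⟨S0, hS0mem, hS0max⟩ :=
    (Δ.powerset.filter (fun S => PossibleSet M p S)).exists_max_image Finset.card h𝒮ne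
  simp only [Finset.mem_filter, Finset.mem_powerset] at hS0mem
  have hS0 : S0 ∈ MPS M p Δ := by
    refine ⟨hS0mem.1, hS0mem.2, fun T hT hTposs => ?_⟩
    exact hS0max T (by simp [Finset.mem_filter, Finset.mem_powerset, hT, hTposs])
  -- angleSet nonempty and finite
  obtain ⟨j0, hj0p, hj0s⟩ := hS0mem.2
  have hjA : j0 ∈ angleSet M p Δ := ⟨hj0p, S0, hS0, hj0s⟩
  have hAfin : (angleSet M p Δ).Finite :=
    hpfin.subset (fun i hi => ne_of_gt hi.1)
  set F := hAfin.toFinset with hF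
  have hFA : ∀ i, i ∈ F ↔ i ∈ angleSet M p Δ := fun i => hAfin.mem_toFinset
  have hFne : F.Nonempty := ⟨j0, (hFA j0).mpr hjA⟩
  have hcoe : angleSet M p Δ = ↑F := (hAfin.coe_toFinset).symm
  have hDpos : 0 < ∑ i ∈ F, p i :=
    Finset.sum_pos (fun i hi => ((hFA i).mp hi).1) hFne
  have hle : ∀ i ∈ F, (ind M α i : ℝ) * p i ≤ p i := by
    intro i hi
    have h1 : (ind M α i : ℝ) ≤ 1 := by
      unfold ind; split <;> norm_num
    calc (ind M α i : ℝ) * p i ≤ 1 * p i :=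
          mul_le_mul_of_nonneg_right h1 (hp0 i)
      _ = p i := one_mul _
  have key : Lcond M p α Δ = 1 ↔ ∀ i ∈ F, Sat M α i := by
    rw [Lcond, hcoe, finsum_mem_coe_finset, finsum_mem_coe_finset,
      div_eq_one_iff_eq (ne_of_gt hDpos)]
    rw [Finset.sum_eq_sum_iff_of_le hle]
    constructor
    · intro h i hi
      have := h i hi
      by_contra hns
      have hind : ind M α i = 0 := by simp [ind, hns]
      rw [hind] at this
      simp at this
      exact absurd this (ne_of_gt ((hFA i).mp hi).1).symm
    · intro h i hi
      have hind : ind M α i = 1 := by simp [ind, h i hi]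
      rw [hind]; ring
  rw [key]
  constructor
  · intro h S hS i hSi
    have hiD : i ∈ dangleSet M Δ := ⟨S, hS, hSi⟩
    rw [← heq] at hiD
    exact h i ((hFA i).mpr hiD)
  · intro h i hi
    have hiA := (hFA i).mp hi
    rw [heq] at hiA
    obtain ⟨S, hS, hSi⟩ := hiA
    exact h S hS i hSi
end

section
/- Corollary (certain reasoning at μ → 1 under possibility of Δ): Let α be an L-sentence and Δ a finite set of L-sentences such that there exists a possible index i with Mᵢ ⊨ Δ. Then L(α|Δ) = 1 if and only if Δ ⊫ α (α is an empirical consequence of Δ). -/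
open FirstOrder
open scoped Classical

variable {L : FirstOrder.Language} {ι : Type*}

/-- **Corollary** (certain reasoning at `μ → 1` under possibility of `Δ`): if some possible
index satisfies `Δ`, then `L(α|Δ) = 1` iff `α` is an empirical consequence of `Δ`. -/
theorem stmt10 [Countable ι]
    (M : ι → Type*) [∀ i, L.Structure (M i)] [∀ i, Nonempty (M i)]
    (p : ι → ℝ) (hp0 : ∀ i, 0 ≤ p i) (hpfin : (Function.support p).Finite)
    (hp1 : ∑ᶠ i, p i = 1)
    (α : L.Sentence) (Δ : Finset L.Sentence)
    (hposs : ∃ i, 0 < p i ∧ SatAll M Δ i) :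
    Lcond M p α Δ = 1 ↔ ∀ i, 0 < p i → SatAll M Δ i → Sat M α i := by
  classical
  have hMPS : MPS M p Δ = {Δ} := by
    apply Set.eq_singleton_iff_unique_mem.mpr
    refine ⟨⟨Finset.Subset.refl _, hposs, fun T hT _ => Finset.card_le_card hT⟩, ?_⟩
    rintro S ⟨hS, _, hSmax⟩
    exact Finset.eq_of_subset_of_card_le hS (hSmax Δ (Finset.Subset.refl _) hposs)
  have hA : angleSet M p Δ = {i | 0 < p i ∧ SatAll M Δ i} := by
    ext i
    simp [angleSet, hMPS]
  have hAfin : (angleSet M p Δ).Finite :=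
    hpfin.subset (fun i hi => by rw [hA] at hi; exact ne_of_gt hi.1)
  set T := hAfin.toFinset with hT
  have hmemT : ∀ i, i ∈ T ↔ (0 < p i ∧ SatAll M Δ i) := by
    intro i
    rw [hT, Set.Finite.mem_toFinset, hA]; rfl
  obtain ⟨i0, hi0p, hi0s⟩ := hposs
  have hi0T : i0 ∈ T := (hmemT i0).mpr ⟨hi0p, hi0s⟩
  have hAc : angleSet M p Δ = ↑T := hAfin.coe_toFinset.symm
  have hD : ∑ᶠ i ∈ angleSet M p Δ, p i = ∑ i ∈ T, p i := by
    rw [hAc, finsum_mem_coe_finset]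
  have hN : ∑ᶠ i ∈ angleSet M p Δ, (ind M α i : ℝ) * p i
      = ∑ i ∈ T, (ind M α i : ℝ) * p i := by
    rw [hAc, finsum_mem_coe_finset]
  have hDpos : 0 < ∑ i ∈ T, p i :=
    Finset.sum_pos' (fun i _ => hp0 i) ⟨i0, hi0T, hi0p⟩
  have hle : ∀ i ∈ T, (ind M α i : ℝ) * p i ≤ p i := by
    intro i _
    by_cases h : Sat M α i <;> simp [ind, h, hp0 i]
  rw [Lcond, hD, hN]
  constructor
  · intro h1 i hip hiS
    by_contra hna
    have hiT : i ∈ T := (hmemT i).mpr ⟨hip, hiS⟩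
    have hlt : ∑ j ∈ T, (ind M α j : ℝ) * p j < ∑ j ∈ T, p j := by
      refine Finset.sum_lt_sum hle ⟨i, hiT, ?_⟩
      simp [ind, hna, hip]
    have := (div_lt_one hDpos).mpr hlt
    rw [h1] at this
    exact lt_irrefl _ this
  · intro h
    have heq : ∀ i ∈ T, (ind M α i : ℝ) * p i = p i := by
      intro i hiT
      obtain ⟨hip, hiS⟩ := (hmemT i).mp hiT
      simp [ind, h i hip hiS]
    rw [Finset.sum_congr rfl heq]
    exact div_self (ne_of_gt hDpos)
end

section
/- Corollary (certain reasoning at μ → 1 recovers logical consequence): Let α be an L-sentence and Δ a finite set of L-sentences such that ⟨Δ⟩ = ⟪Δ⟫ and there exists a possible index i with Mᵢ ⊨ Δ. Then L(α|Δ) = 1 if and only if Δ ⊨ α (α is a logical consequence of Δ relative to the family). -/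
open FirstOrder
open scoped Classical

variable {L : FirstOrder.Language} {ι : Type*}

/-- **Corollary** (certain reasoning at `μ → 1` recovers logical consequence): if
`⟨Δ⟩ = ⟪Δ⟫` and some possible index satisfies `Δ`, then `L(α|Δ) = 1` iff `Δ ⊨ α`. -/
theorem stmt11 [Countable ι]
    (M : ι → Type*) [∀ i, L.Structure (M i)] [∀ i, Nonempty (M i)]
    (p : ι → ℝ) (hp0 : ∀ i, 0 ≤ p i) (hpfin : (Function.support p).Finite)
    (hp1 : ∑ᶠ i, p i = 1)
    (α : L.Sentence) (Δ : Finset L.Sentence)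
    (heq : angleSet M p Δ = dangleSet M Δ)
    (hposs : ∃ i, 0 < p i ∧ SatAll M Δ i) :
    Lcond M p α Δ = 1 ↔ ∀ i, SatAll M Δ i → Sat M α i := by

  classical
  have hDMPS : Δ ∈ MPS M p Δ :=
    ⟨Finset.Subset.refl _, hposs, fun T hT _ => Finset.card_le_card hT⟩
  obtain ⟨i0, hpi0, hi0⟩ := hposs
  have hDMCS : Δ ∈ MCS M Δ :=
    ⟨Finset.Subset.refl _, ⟨i0, hi0⟩, fun T hT _ => Finset.card_le_card hT⟩
  have hMPSeq : ∀ S ∈ MPS M p Δ, S = Δ := by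
    rintro S ⟨hS, _, hmax⟩
    exact Finset.eq_of_subset_of_card_le hS
      (hmax Δ (Finset.Subset.refl _) ⟨i0, hpi0, hi0⟩)
  have hpos : ∀ i, SatAll M Δ i → 0 < p i := by
    intro i hi
    have h1 : i ∈ dangleSet M Δ := ⟨Δ, hDMCS, hi⟩
    rw [← heq] at h1
    exact h1.1
  have hangle : angleSet M p Δ = {i | SatAll M Δ i} := by
    ext i
    constructor
    · rintro ⟨hpi, S, hSmem, hSi⟩
      rw [hMPSeq S hSmem] at hSi
      exact hSi
    · intro hi
      exact ⟨hpos i hi, Δ, hDMPS, hi⟩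
  have hAfin : ({i | SatAll M Δ i} : Set ι).Finite :=
    hpfin.subset (fun i hi => (hpos i hi).ne')
  have hcoe : angleSet M p Δ = (hAfin.toFinset : Set ι) := by
    rw [hangle, hAfin.coe_toFinset]
  have hD : 0 < ∑ i ∈ hAfin.toFinset, p i := by
    apply Finset.sum_pos' (fun i _ => hp0 i)
    exact ⟨i0, hAfin.mem_toFinset.2 hi0, hpi0⟩
  have hle : ∀ i ∈ hAfin.toFinset, (ind M α i : ℝ) * p i ≤ p i := by
    intro i hi
    have := hp0 i
    unfold ind
    split_ifs with h
    · simp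
    · simp [this]
  rw [Lcond, hcoe, finsum_mem_coe_finset, finsum_mem_coe_finset,
    div_eq_one_iff_eq hD.ne', Finset.sum_eq_sum_iff_of_le hle]
  constructor
  · intro h i hi
    have hmem := hAfin.mem_toFinset.2 hi
    have := h i hmem
    have hpi := hpos i hi
    by_contra hns
    have : (ind M α i : ℝ) = 0 := by simp [ind, hns]
    simp [this] at *
    nlinarith [h i hmem]
  · intro h i hi
    have hsat : SatAll M Δ i := hAfin.mem_toFinset.1 hi
    have : ind M α i = 1 := by simp [ind, h i hsat]
    simp [this]
end

section
/- Corollary (μ → 1 and μ = 1 agree on possible premises): Let α be an L-sentence and Δ a finite set of L-sentences such that there exists a possible index i with Mᵢ ⊨ Δ. Then L(α|Δ) = P₁(α|Δ). -/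
open FirstOrder
open scoped Classical

variable {L : FirstOrder.Language} {ι : Type*}

/-- **Corollary** (`μ → 1` and `μ = 1` agree on possible premises): if some possible index
satisfies `Δ`, then `L(α|Δ) = P₁(α|Δ)`. -/
theorem stmt12 [Countable ι]
    (M : ι → Type*) [∀ i, L.Structure (M i)] [∀ i, Nonempty (M i)]
    (p : ι → ℝ) (hp0 : ∀ i, 0 ≤ p i) (hpfin : (Function.support p).Finite)
    (hp1 : ∑ᶠ i, p i = 1)
    (α : L.Sentence) (Δ : Finset L.Sentence)
    (hposs : ∃ i, 0 < p i ∧ SatAll M Δ i) :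
    Lcond M p α Δ = Pcond M p 1 α Δ := by
  classical
  have hΔposs : PossibleSet M p Δ := hposs
  have hMPS : MPS M p Δ = {Δ} := by
    ext S
    simp only [MPS, Set.mem_setOf_eq, Set.mem_singleton_iff]
    constructor
    · rintro ⟨hS, -, hmax⟩
      exact Finset.eq_of_subset_of_card_le hS (hmax Δ le_rfl hΔposs)
    · rintro rfl
      exact ⟨le_rfl, hΔposs, fun T hT _ => Finset.card_le_card hT⟩
  have hang : angleSet M p Δ = {i | 0 < p i ∧ SatAll M Δ i} := by
    ext i
    simp [angleSet, hMPS]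
  have hnsat : ∀ i, SatAll M Δ i ↔ nSat M Δ i = Δ.card := by
    intro i
    constructor
    · intro h
      unfold nSat
      rw [Finset.filter_eq_self.mpr h]
    · intro h β hβ
      have hfe : Δ.filter (fun β => Sat M β i) = Δ :=
        Finset.eq_of_subset_of_card_le (Finset.filter_subset _ _) (le_of_eq h.symm)
      have : β ∈ Δ.filter (fun β => Sat M β i) := by rw [hfe]; exact hβ
      exact (Finset.mem_filter.mp this).2
  have hle : ∀ i, nSat M Δ i ≤ Δ.card := fun i => Finset.card_filter_le _ _
  have hz : ∀ i, ((1:ℝ) - 1) ^ (Δ.card - nSat M Δ i)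
      = if SatAll M Δ i then 1 else 0 := by
    intro i
    by_cases h : SatAll M Δ i
    · rw [if_pos h, (hnsat i).mp h, Nat.sub_self, pow_zero]
    · have hne : Δ.card - nSat M Δ i ≠ 0 := by
        have := hle i
        have hne' : nSat M Δ i ≠ Δ.card := fun hc => h ((hnsat i).mpr hc)
        omega
      rw [if_neg h, sub_self, zero_pow hne]
  have hza : ∀ i, ((1:ℝ) - 1) ^ (1 - ind M α i) = if Sat M α i then 1 else 0 := by
    intro i
    by_cases h : Sat M α i
    · simp [ind, h]
    · simp [ind, h]
  have hden : ∀ i, Set.indicator (angleSet M p Δ) p i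
      = (1:ℝ) ^ (nSat M Δ i) * (1 - 1) ^ (Δ.card - nSat M Δ i) * p i := by
    intro i
    rw [hz i, one_pow, one_mul]
    by_cases h : SatAll M Δ i
    · rw [if_pos h, one_mul]
      rcases (hp0 i).lt_or_eq with hpi | hpi
      · exact Set.indicator_of_mem (by rw [hang]; exact ⟨hpi, h⟩) p
      · rw [Set.indicator_apply]
        split <;> simp [← hpi]
    · rw [if_neg h, zero_mul]
      exact Set.indicator_of_notMem (by rw [hang]; exact fun hc => h hc.2) p
  have hnum : ∀ i, Set.indicator (angleSet M p Δ) (fun i => (ind M α i : ℝ) * p i) i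
      = (1:ℝ) ^ (ind M α i) * (1 - 1) ^ (1 - ind M α i) *
        ((1:ℝ) ^ (nSat M Δ i) * (1 - 1) ^ (Δ.card - nSat M Δ i)) * p i := by
    intro i
    rw [hz i, hza i, one_pow, one_pow, one_mul, one_mul]
    by_cases h : SatAll M Δ i
    · rw [if_pos h, mul_one]
      by_cases ha : Sat M α i
      · rw [if_pos ha]
        rcases (hp0 i).lt_or_eq with hpi | hpi
        · rw [Set.indicator_of_mem (by rw [hang]; exact ⟨hpi, h⟩)]
          simp [ind, ha]
        · rw [Set.indicator_apply]
          split <;> simp [← hpi]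
      · rw [if_neg ha, zero_mul]
        rw [Set.indicator_apply]
        split <;> simp [ind, ha]
    · rw [if_neg h, mul_zero, zero_mul]
      exact Set.indicator_of_notMem (by rw [hang]; exact fun hc => h hc.2) _
  unfold Lcond Pcond
  rw [finsum_mem_def, finsum_mem_def, finsum_congr hnum, finsum_congr hden]
end
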